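/- Let {X(τ):τ∈S_0} be an admissible family with sup_{τ∈S_0} E[X(τ)] < ∞ and value function v. Fix S∈S_0 and let τ*∈S_S be such that E[X(τ*)]<∞. The following are equivalent: (a) τ* is S-optimal for v(S), i.e. v(S)=E_S[X(τ*)] a.s.; (b) v(τ*)=X(τ*) a.s. and E[v(S)]=E[v(τ*)]; (c) E[v(S)]=E[X(τ*)]. -/

import Mathlib

open MeasureTheory Filter Set

noncomputable section

namespace OptMultStop

variable {Ω : Type*}

/-- A real function is right-continuous with left limits (RCLL) on `[0, T]`. -/
def RCLLOn (f : ℝ → ℝ) (T : ℝ) : Prop :=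
  (∀ t ∈ Set.Ico (0 : ℝ) T, ContinuousWithinAt f (Set.Ici t) t) ∧
    ∀ t ∈ Set.Ioc (0 : ℝ) T, ∃ l : ℝ, Filter.Tendsto f (nhdsWithin t (Set.Iio t)) (nhds l)

/-- A real function is right-continuous on `[0, T)`. -/
def RCOn (f : ℝ → ℝ) (T : ℝ) : Prop :=
  ∀ t ∈ Set.Ico (0 : ℝ) T, ContinuousWithinAt f (Set.Ici t) t

/-- `τ` is a stopping time for `ℱ` taking values in `[s ·, T]`; for `s = S` a stopping
time this encodes membership in `S_S`. -/
def IsStopIn [m : MeasurableSpace Ω] (ℱ : Filtration ℝ m) (T : ℝ) (s τ : Ω → ℝ) : Prop :=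
  IsStoppingTime ℱ (fun ω => (τ ω : WithTop ℝ)) ∧ (∀ ω, s ω ≤ τ ω) ∧ ∀ ω, τ ω ≤ T

/-- Membership in `S_0`: a stopping time with values in `[0, T]`. -/
def Stop0 [m : MeasurableSpace Ω] (ℱ : Filtration ℝ m) (T : ℝ) (τ : Ω → ℝ) : Prop :=
  IsStopIn ℱ T (fun _ => (0 : ℝ)) τ

/-- `g` is an essential supremum of the family of random variables `s`. -/
def IsEssSupFam [MeasurableSpace Ω] (μ : Measure Ω) (s : Set (Ω → ℝ)) (g : Ω → ℝ) : Prop :=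
  (∀ f ∈ s, f ≤ᵐ[μ] g) ∧ ∀ h : Ω → ℝ, (∀ f ∈ s, f ≤ᵐ[μ] h) → g ≤ᵐ[μ] h

/-- `g` is an essential infimum of the family of random variables `s`. -/
def IsEssInfFam [MeasurableSpace Ω] (μ : Measure Ω) (s : Set (Ω → ℝ)) (g : Ω → ℝ) : Prop :=
  (∀ f ∈ s, g ≤ᵐ[μ] f) ∧ ∀ h : Ω → ℝ, (∀ f ∈ s, h ≤ᵐ[μ] f) → h ≤ᵐ[μ] g

/-- An `𝔽`-consistent nonlinear expectation `(E, Dom(E))` on the horizon `[0, T]`,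
together with its conditional versions at stopping times, satisfying the domain
axioms (D1)-(D3), (A1)-(A4) at stopping times, and hypotheses (H0)-(H5). -/
structure FExp [m : MeasurableSpace Ω] (μ : Measure Ω) (T : ℝ) (ℱ : Filtration ℝ m) where
  /-- the domain `Dom(E)` -/
  Dom : Set (Ω → ℝ)
  /-- `cond τ ξ` is the conditional expectation `E_τ[ξ]` at the stopping time `τ` -/
  cond : (Ω → ℝ) → (Ω → ℝ) → Ω → ℝ
  /-- `E0 ξ` is the (deterministic) value `E[ξ] = E_0[ξ]` -/
  E0 : (Ω → ℝ) → ℝ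
  zero_mem : (fun _ => (0 : ℝ)) ∈ Dom
  one_mem : (fun _ => (1 : ℝ)) ∈ Dom
  /-- (H4): all constants belong to the domain -/
  const_mem : ∀ c : ℝ, (fun _ => c) ∈ Dom
  add_mem : ∀ {ξ η : Ω → ℝ}, ξ ∈ Dom → η ∈ Dom → ξ + η ∈ Dom
  indicator_mem : ∀ {ξ : Ω → ℝ}, ξ ∈ Dom → ∀ {A : Set Ω}, MeasurableSet A →
    A.indicator ξ ∈ Dom
  sandwich_mem : ∀ {ξ η : Ω → ℝ}, η ∈ Dom → (∀ᵐ ω ∂μ, 0 ≤ ξ ω ∧ ξ ω ≤ η ω) → ξ ∈ Dom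
  cond_mem : ∀ {τ ξ : Ω → ℝ}, Stop0 ℱ T τ → ξ ∈ Dom → 0 ≤ᵐ[μ] ξ → cond τ ξ ∈ Dom
  cond_nonneg : ∀ {τ ξ : Ω → ℝ}, Stop0 ℱ T τ → ξ ∈ Dom → 0 ≤ᵐ[μ] ξ → 0 ≤ᵐ[μ] cond τ ξ
  /-- `E_τ[ξ]` is `F_τ`-measurable -/
  cond_adapted : ∀ {τ ξ : Ω → ℝ} (hτ : Stop0 ℱ T τ), ξ ∈ Dom → 0 ≤ᵐ[μ] ξ →
    Measurable[hτ.1.measurableSpace] (cond τ ξ)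
  /-- monotonicity -/
  mono : ∀ {τ ξ η : Ω → ℝ}, Stop0 ℱ T τ → ξ ∈ Dom → 0 ≤ᵐ[μ] ξ → η ∈ Dom → 0 ≤ᵐ[μ] η →
    ξ ≤ᵐ[μ] η → cond τ ξ ≤ᵐ[μ] cond τ η
  /-- strict monotonicity -/
  strict_mono : ∀ {τ ξ η : Ω → ℝ}, Stop0 ℱ T τ → ξ ∈ Dom → 0 ≤ᵐ[μ] ξ → η ∈ Dom →
    0 ≤ᵐ[μ] η → ξ ≤ᵐ[μ] η → cond τ ξ =ᵐ[μ] cond τ η → ξ =ᵐ[μ] η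
  /-- time consistency -/
  time_consistent : ∀ {σ τ ξ : Ω → ℝ}, Stop0 ℱ T σ → Stop0 ℱ T τ → (∀ ω, σ ω ≤ τ ω) →
    ξ ∈ Dom → 0 ≤ᵐ[μ] ξ → cond σ (cond τ ξ) =ᵐ[μ] cond σ ξ
  /-- zero-one law -/
  zero_one : ∀ {τ ξ : Ω → ℝ} (hτ : Stop0 ℱ T τ), ξ ∈ Dom → 0 ≤ᵐ[μ] ξ →
    ∀ {A : Set Ω}, MeasurableSet[hτ.1.measurableSpace] A →
    cond τ (A.indicator ξ) =ᵐ[μ] A.indicator (cond τ ξ)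
  /-- translation invariance -/
  translation : ∀ {τ ξ η : Ω → ℝ} (hτ : Stop0 ℱ T τ), ξ ∈ Dom → 0 ≤ᵐ[μ] ξ → η ∈ Dom →
    0 ≤ᵐ[μ] η → Measurable[hτ.1.measurableSpace] η → cond τ (ξ + η) =ᵐ[μ] cond τ ξ + η
  /-- `F_0` is trivial: `E_0[ξ]` is the constant `E0 ξ` -/
  E0_eq : ∀ {ξ : Ω → ℝ}, ξ ∈ Dom → 0 ≤ᵐ[μ] ξ →
    cond (fun _ => (0 : ℝ)) ξ =ᵐ[μ] fun _ => E0 ξ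
  /-- the process `t ↦ E_t[ξ]` has RCLL paths -/
  rcll_paths : ∀ {ξ : Ω → ℝ}, ξ ∈ Dom → 0 ≤ᵐ[μ] ξ →
    ∀ᵐ ω ∂μ, RCLLOn (fun t => cond (fun _ => t) ξ ω) T
  /-- (H0) -/
  h0 : ∀ {A : Set Ω}, MeasurableSet A → 0 < μ A →
    Tendsto (fun n : ℕ => E0 (A.indicator fun _ => (n : ℝ))) atTop atTop
  /-- (H1) -/
  h1 : ∀ {ξ : Ω → ℝ}, ξ ∈ Dom → 0 ≤ᵐ[μ] ξ → ∀ {A : ℕ → Set Ω},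
    (∀ n, MeasurableSet (A n)) → Monotone A → (∀ᵐ ω ∂μ, ω ∈ ⋃ n, A n) →
    Tendsto (fun n => E0 ((A n).indicator ξ)) atTop (nhds (E0 ξ))
  /-- (H2) -/
  h2 : ∀ {ξ η : Ω → ℝ}, ξ ∈ Dom → 0 ≤ᵐ[μ] ξ → η ∈ Dom → 0 ≤ᵐ[μ] η →
    ∀ {A : ℕ → Set Ω}, (∀ n, MeasurableSet (A n)) → Antitone A →
    (∀ᵐ ω ∂μ, ω ∉ ⋂ n, A n) →
    Tendsto (fun n => E0 (ξ + (A n).indicator η)) atTop (nhds (E0 ξ))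
  /-- (H5) -/
  h5 : ∀ {ξ : ℕ → Ω → ℝ} {ζ : Ω → ℝ}, (∀ n, ξ n ∈ Dom) → (∀ n, 0 ≤ᵐ[μ] ξ n) →
    (∀ᵐ ω ∂μ, Tendsto (fun n => ξ n ω) atTop (nhds (ζ ω))) →
    (∃ C : ℝ, ∃ᶠ n in atTop, E0 (ξ n) ≤ C) → ζ ∈ Dom

variable [m : MeasurableSpace Ω] {μ : Measure Ω} {T : ℝ} {ℱ : Filtration ℝ m}

/-- (H6): sub-additivity. -/
def FExp.Subadditive (𝔈 : FExp μ T ℱ) : Prop :=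
  ∀ ⦃τ ξ η : Ω → ℝ⦄, Stop0 ℱ T τ → ξ ∈ 𝔈.Dom → 0 ≤ᵐ[μ] ξ → η ∈ 𝔈.Dom → 0 ≤ᵐ[μ] η →
    𝔈.cond τ (ξ + η) ≤ᵐ[μ] 𝔈.cond τ ξ + 𝔈.cond τ η

/-- (H7): positive homogeneity. -/
def FExp.PosHom (𝔈 : FExp μ T ℱ) : Prop :=
  ∀ ⦃τ ξ : Ω → ℝ⦄ (l : ℝ), 0 ≤ l → Stop0 ℱ T τ → ξ ∈ 𝔈.Dom → 0 ≤ᵐ[μ] ξ →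
    𝔈.cond τ (fun ω => l * ξ ω) =ᵐ[μ] fun ω => l * 𝔈.cond τ ξ ω

/-- Admissible family of rewards indexed by stopping times. -/
def Admissible (𝔈 : FExp μ T ℱ) (X : (Ω → ℝ) → Ω → ℝ) : Prop :=
  (∀ τ : Ω → ℝ, ∀ hτ : Stop0 ℱ T τ, X τ ∈ 𝔈.Dom ∧ 0 ≤ᵐ[μ] X τ ∧
      Measurable[hτ.1.measurableSpace] (X τ)) ∧
    ∀ τ σ : Ω → ℝ, Stop0 ℱ T τ → Stop0 ℱ T σ →
      ∀ᵐ ω ∂μ, τ ω = σ ω → X τ ω = X σ ω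

/-- `sup_{τ ∈ S_0} E[X(τ)] < ∞`. -/
def BddRewardE0 (𝔈 : FExp μ T ℱ) (X : (Ω → ℝ) → Ω → ℝ) : Prop :=
  ∃ C : ℝ, ∀ τ : Ω → ℝ, Stop0 ℱ T τ → 𝔈.E0 (X τ) ≤ C

/-- `v` is the value function family of the single stopping problem for the reward `X`:
`v(S) = esssup_{τ ∈ S_S} E_S[X(τ)]`. -/
def IsValueFam (𝔈 : FExp μ T ℱ) (X v : (Ω → ℝ) → Ω → ℝ) : Prop :=
  ∀ S : Ω → ℝ, Stop0 ℱ T S →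
    IsEssSupFam μ {g | ∃ τ : Ω → ℝ, IsStopIn ℱ T S τ ∧ g = 𝔈.cond S (X τ)} (v S)

/-- An `E`-supermartingale system. -/
def SupermartSys (𝔈 : FExp μ T ℱ) (h : (Ω → ℝ) → Ω → ℝ) : Prop :=
  (∀ τ : Ω → ℝ, ∀ hτ : Stop0 ℱ T τ, h τ ∈ 𝔈.Dom ∧ 0 ≤ᵐ[μ] h τ ∧
      Measurable[hτ.1.measurableSpace] (h τ)) ∧
    ∀ τ σ : Ω → ℝ, Stop0 ℱ T τ → Stop0 ℱ T σ → (∀ᵐ ω ∂μ, τ ω ≤ σ ω) →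
      𝔈.cond τ (h σ) ≤ᵐ[μ] h τ

/-- Right-continuity along stopping times in `E`-expectation (RCE). -/
def RCE (𝔈 : FExp μ T ℱ) (X : (Ω → ℝ) → Ω → ℝ) : Prop :=
  ∀ τ : Ω → ℝ, Stop0 ℱ T τ → ∀ τs : ℕ → Ω → ℝ, (∀ n, Stop0 ℱ T (τs n)) →
    (∀ᵐ ω ∂μ, Antitone (fun n => τs n ω) ∧
      Tendsto (fun n => τs n ω) atTop (nhds (τ ω))) →
    Tendsto (fun n => 𝔈.E0 (X (τs n))) atTop (nhds (𝔈.E0 (X τ)))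

/-- Left-continuity along stopping times in `E`-expectation (LCE). -/
def LCE (𝔈 : FExp μ T ℱ) (X : (Ω → ℝ) → Ω → ℝ) : Prop :=
  ∀ τ : Ω → ℝ, Stop0 ℱ T τ → ∀ τs : ℕ → Ω → ℝ, (∀ n, Stop0 ℱ T (τs n)) →
    (∀ᵐ ω ∂μ, Monotone (fun n => τs n ω) ∧
      Tendsto (fun n => τs n ω) atTop (nhds (τ ω))) →
    Tendsto (fun n => 𝔈.E0 (X (τs n))) atTop (nhds (𝔈.E0 (X τ)))

/-- Continuity along stopping times in `E`-expectation (CE). -/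
def CE (𝔈 : FExp μ T ℱ) (X : (Ω → ℝ) → Ω → ℝ) : Prop :=
  RCE 𝔈 X ∧ LCE 𝔈 X

/-- Right-continuity along stopping times (RC): a.s. pointwise convergence. -/
def RCfam (𝔈 : FExp μ T ℱ) (X : (Ω → ℝ) → Ω → ℝ) : Prop :=
  ∀ τ : Ω → ℝ, Stop0 ℱ T τ → ∀ τs : ℕ → Ω → ℝ, (∀ n, Stop0 ℱ T (τs n)) →
    (∀ᵐ ω ∂μ, Antitone (fun n => τs n ω) ∧
      Tendsto (fun n => τs n ω) atTop (nhds (τ ω))) →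
    ∀ᵐ ω ∂μ, Tendsto (fun n => X (τs n) ω) atTop (nhds (X τ ω))

/-- Biadmissible family of rewards indexed by pairs of stopping times. -/
def Biadmissible (𝔈 : FExp μ T ℱ) (X : (Ω → ℝ) → (Ω → ℝ) → Ω → ℝ) : Prop :=
  (∀ τ σ : Ω → ℝ, ∀ hτ : Stop0 ℱ T τ, ∀ hσ : Stop0 ℱ T σ,
      X τ σ ∈ 𝔈.Dom ∧ 0 ≤ᵐ[μ] X τ σ ∧
      Measurable[(hτ.1.max hσ.1).measurableSpace] (X τ σ)) ∧
    ∀ τ σ τ' σ' : Ω → ℝ, Stop0 ℱ T τ → Stop0 ℱ T σ → Stop0 ℱ T τ' → Stop0 ℱ T σ' →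
      ∀ᵐ ω ∂μ, τ ω = τ' ω → σ ω = σ' ω → X τ σ ω = X τ' σ' ω

/-- `sup_{τ,σ ∈ S_0} E[X(τ,σ)] < ∞`. -/
def BddReward2E0 (𝔈 : FExp μ T ℱ) (X : (Ω → ℝ) → (Ω → ℝ) → Ω → ℝ) : Prop :=
  ∃ C : ℝ, ∀ τ σ : Ω → ℝ, Stop0 ℱ T τ → Stop0 ℱ T σ → 𝔈.E0 (X τ σ) ≤ C

/-- `v` is the value function family of the double stopping problem:
`v(S) = esssup_{τ₁,τ₂ ∈ S_S} E_S[X(τ₁,τ₂)]`. -/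
def IsValueFam2 (𝔈 : FExp μ T ℱ) (X : (Ω → ℝ) → (Ω → ℝ) → Ω → ℝ)
    (v : (Ω → ℝ) → Ω → ℝ) : Prop :=
  ∀ S : Ω → ℝ, Stop0 ℱ T S →
    IsEssSupFam μ
      {g | ∃ τ₁ τ₂ : Ω → ℝ, IsStopIn ℱ T S τ₁ ∧ IsStopIn ℱ T S τ₂ ∧
        g = 𝔈.cond S (X τ₁ τ₂)} (v S)

/-- `u₁(θ) = esssup_{τ₁ ∈ S_θ} E_θ[X(τ₁, θ)]`. -/
def IsU1 (𝔈 : FExp μ T ℱ) (X : (Ω → ℝ) → (Ω → ℝ) → Ω → ℝ) (u₁ : (Ω → ℝ) → Ω → ℝ) : Prop :=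
  ∀ θ : Ω → ℝ, Stop0 ℱ T θ →
    IsEssSupFam μ {g | ∃ τ : Ω → ℝ, IsStopIn ℱ T θ τ ∧ g = 𝔈.cond θ (X τ θ)} (u₁ θ)

/-- `u₂(θ) = esssup_{τ₂ ∈ S_θ} E_θ[X(θ, τ₂)]`. -/
def IsU2 (𝔈 : FExp μ T ℱ) (X : (Ω → ℝ) → (Ω → ℝ) → Ω → ℝ) (u₂ : (Ω → ℝ) → Ω → ℝ) : Prop :=
  ∀ θ : Ω → ℝ, Stop0 ℱ T θ →
    IsEssSupFam μ {g | ∃ τ : Ω → ℝ, IsStopIn ℱ T θ τ ∧ g = 𝔈.cond θ (X θ τ)} (u₂ θ)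

/-- Uniform right-continuity of a biadmissible family along stopping times in
`ℰ`-expectation (URCℰ). -/
def URCE2 (ℰ : FExp μ T ℱ) (X : (Ω → ℝ) → (Ω → ℝ) → Ω → ℝ) : Prop :=
  ∀ σ : Ω → ℝ, Stop0 ℱ T σ → ∀ σs : ℕ → Ω → ℝ, (∀ n, Stop0 ℱ T (σs n)) →
    (∀ᵐ ω ∂μ, Antitone (fun n => σs n ω) ∧
      Tendsto (fun n => σs n ω) atTop (nhds (σ ω))) →
    ∀ ε : ℝ, 0 < ε → ∃ N : ℕ, ∀ n ≥ N, ∀ τ : Ω → ℝ, Stop0 ℱ T τ →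
      ℰ.E0 (fun ω => |X τ σ ω - X τ (σs n) ω|) ≤ ε ∧
      ℰ.E0 (fun ω => |X σ τ ω - X (σs n) τ ω|) ≤ ε

/-- Uniform left-continuity of a biadmissible family along stopping times in
`ℰ`-expectation (ULCℰ). -/
def ULCE2 (ℰ : FExp μ T ℱ) (X : (Ω → ℝ) → (Ω → ℝ) → Ω → ℝ) : Prop :=
  ∀ σ : Ω → ℝ, Stop0 ℱ T σ → ∀ σs : ℕ → Ω → ℝ, (∀ n, Stop0 ℱ T (σs n)) →
    (∀ᵐ ω ∂μ, Monotone (fun n => σs n ω) ∧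
      Tendsto (fun n => σs n ω) atTop (nhds (σ ω))) →
    ∀ ε : ℝ, 0 < ε → ∃ N : ℕ, ∀ n ≥ N, ∀ τ : Ω → ℝ, Stop0 ℱ T τ →
      ℰ.E0 (fun ω => |X τ σ ω - X τ (σs n) ω|) ≤ ε ∧
      ℰ.E0 (fun ω => |X σ τ ω - X (σs n) τ ω|) ≤ ε

/-- Uniform continuity (UCℰ) of a biadmissible family. -/
def UCE2 (ℰ : FExp μ T ℱ) (X : (Ω → ℝ) → (Ω → ℝ) → Ω → ℝ) : Prop :=
  URCE2 ℰ X ∧ ULCE2 ℰ X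

/-- `(E, Dom(E))` is dominated by `(Ẽ, Dom(Ẽ))`. -/
def Dominated (𝔈 𝔉 : FExp μ T ℱ) : Prop :=
  𝔈.Dom ⊆ 𝔉.Dom ∧
    ∀ τ : Ω → ℝ, Stop0 ℱ T τ → ∀ ξ η : Ω → ℝ, ξ ∈ 𝔈.Dom → η ∈ 𝔈.Dom →
      ∀ᵐ ω ∂μ, 𝔈.cond τ (ξ + η) ω - 𝔈.cond τ η ω ≤ 𝔉.cond τ ξ ω

/-- The filtration contains all `μ`-null sets (part of the usual conditions). -/
def CompleteFiltration (μ : Measure Ω) (ℱ : Filtration ℝ m) : Prop :=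
  ∀ s : Set Ω, μ s = 0 → ∀ t : ℝ, MeasurableSet[ℱ t] s

/-- The filtration is right-continuous (part of the usual conditions). -/
def RightContinuousFiltration (ℱ : Filtration ℝ m) : Prop :=
  ∀ t : ℝ, (ℱ t : MeasurableSpace Ω) = ⨅ u ∈ Set.Ioi t, ℱ u

/-- A `d`-tuple of stopping times, all in `S_s`. -/
def StopVec (ℱ : Filtration ℝ m) (T : ℝ) (s : Ω → ℝ) {d : ℕ} (τ : Fin d → Ω → ℝ) : Prop :=
  ∀ i, IsStopIn ℱ T s (τ i)

/-- A `d`-admissible family of rewards. -/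
def DAdmissible (𝔈 : FExp μ T ℱ) {d : ℕ} (X : (Fin d → Ω → ℝ) → Ω → ℝ) : Prop :=
  (∀ τ : Fin d → Ω → ℝ, StopVec ℱ T (fun _ => (0 : ℝ)) τ →
      X τ ∈ 𝔈.Dom ∧ 0 ≤ᵐ[μ] X τ ∧
      ∀ h : IsStoppingTime ℱ fun ω => ((⨆ i, τ i ω : ℝ) : WithTop ℝ),
        Measurable[h.measurableSpace] (X τ)) ∧
    ∀ τ σ : Fin d → Ω → ℝ, StopVec ℱ T (fun _ => (0 : ℝ)) τ →
      StopVec ℱ T (fun _ => (0 : ℝ)) σ →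
      ∀ᵐ ω ∂μ, (∀ i, τ i ω = σ i ω) → X τ ω = X σ ω

/-- `sup_{τ ∈ S_0^d} E[X(τ)] < ∞`. -/
def BddRewardDE0 (𝔈 : FExp μ T ℱ) {d : ℕ} (X : (Fin d → Ω → ℝ) → Ω → ℝ) : Prop :=
  ∃ C : ℝ, ∀ τ : Fin d → Ω → ℝ, StopVec ℱ T (fun _ => (0 : ℝ)) τ → 𝔈.E0 (X τ) ≤ C

/-- `v` is the value function family of the `d`-stopping problem:
`v(S) = esssup_{τ ∈ S_S^d} E_S[X(τ)]`. -/
def IsValueFamD (𝔈 : FExp μ T ℱ) {d : ℕ} (X : (Fin d → Ω → ℝ) → Ω → ℝ)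
    (v : (Ω → ℝ) → Ω → ℝ) : Prop :=
  ∀ S : Ω → ℝ, Stop0 ℱ T S →
    IsEssSupFam μ
      {g | ∃ τ : Fin d → Ω → ℝ, StopVec ℱ T S τ ∧ g = 𝔈.cond S (X τ)} (v S)

/-- `u^{(i)}(θ) = esssup_{τ ∈ S_θ^{d-1}} E_θ[X^{(i)}(τ, θ)]`, where `X^{(i)}(τ, θ)`
inserts `θ` in the `i`-th slot. -/
def IsUi (𝔈 : FExp μ T ℱ) {d : ℕ} (X : (Fin (d + 1) → Ω → ℝ) → Ω → ℝ)
    (ui : Fin (d + 1) → (Ω → ℝ) → Ω → ℝ) : Prop :=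
  ∀ i : Fin (d + 1), ∀ θ : Ω → ℝ, Stop0 ℱ T θ →
    IsEssSupFam μ
      {g | ∃ τ : Fin d → Ω → ℝ, StopVec ℱ T θ τ ∧ g = 𝔈.cond θ (X (i.insertNth θ τ))}
      (ui i θ)

/-- Uniform continuity (UCE) of a `d`-admissible family along monotone sequences of
stopping times. -/
def UCED (𝔈 : FExp μ T ℱ) {d : ℕ} (X : (Fin (d + 1) → Ω → ℝ) → Ω → ℝ) : Prop :=
  ∀ i : Fin (d + 1), ∀ S : Ω → ℝ, Stop0 ℱ T S → ∀ Ss : ℕ → Ω → ℝ,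
    (∀ n, Stop0 ℱ T (Ss n)) →
    ((∀ᵐ ω ∂μ, Monotone fun n => Ss n ω) ∨ (∀ᵐ ω ∂μ, Antitone fun n => Ss n ω)) →
    (∀ᵐ ω ∂μ, Tendsto (fun n => Ss n ω) atTop (nhds (S ω))) →
    ∀ ε : ℝ, 0 < ε → ∃ N : ℕ, ∀ n ≥ N, ∀ θ : Fin d → Ω → ℝ,
      StopVec ℱ T (fun _ => (0 : ℝ)) θ →
      𝔈.E0 (fun ω => |X (i.insertNth (Ss n) θ) ω - X (i.insertNth S θ) ω|) ≤ ε

section AuxLemmas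

open scoped Classical

variable {μ : Measure Ω} {T : ℝ} {ℱ : Filtration ℝ m}
variable {S τ σ : Ω → ℝ} {ξ η : Ω → ℝ} {𝔈 : FExp μ T ℱ}

lemma isStopIn_self (hS : Stop0 ℱ T S) : IsStopIn ℱ T S S :=
  ⟨hS.1, fun _ => le_rfl, hS.2.2⟩

lemma stop0_of_isStopIn (hS : Stop0 ℱ T S) (h : IsStopIn ℱ T S τ) : Stop0 ℱ T τ :=
  ⟨h.1, fun ω => (hS.2.1 ω).trans (h.2.1 ω), h.2.2⟩

lemma stop0_zero (hT : 0 < T) : Stop0 ℱ T (fun _ => (0 : ℝ)) :=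
  ⟨isStoppingTime_const ℱ (0 : ℝ), fun _ => le_rfl, fun _ => hT.le⟩

lemma ae_point [IsProbabilityMeasure μ] {p : Ω → Prop} (h : ∀ᵐ ω ∂μ, p ω) : ∃ ω, p ω := by
  have : (MeasureTheory.ae μ).NeBot := ae_neBot.2 (IsProbabilityMeasure.ne_zero μ)
  exact h.exists

lemma cond_congr (hτ : Stop0 ℱ T τ) (hξ : ξ ∈ 𝔈.Dom) (hξ0 : 0 ≤ᵐ[μ] ξ)
    (hη : η ∈ 𝔈.Dom) (hη0 : 0 ≤ᵐ[μ] η) (h : ξ =ᵐ[μ] η) :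
    𝔈.cond τ ξ =ᵐ[μ] 𝔈.cond τ η := by
  have h1 := 𝔈.mono hτ hξ hξ0 hη hη0 h.le
  have h2 := 𝔈.mono hτ hη hη0 hξ hξ0 h.symm.le
  filter_upwards [h1, h2] with ω a b using le_antisymm a b

lemma E0_mono' [IsProbabilityMeasure μ] (hT : 0 < T) (hξ : ξ ∈ 𝔈.Dom) (hξ0 : 0 ≤ᵐ[μ] ξ)
    (hη : η ∈ 𝔈.Dom) (hη0 : 0 ≤ᵐ[μ] η) (h : ξ ≤ᵐ[μ] η) : 𝔈.E0 ξ ≤ 𝔈.E0 η := by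
  have h1 := 𝔈.E0_eq hξ hξ0
  have h2 := 𝔈.E0_eq hη hη0
  have h3 := 𝔈.mono (stop0_zero hT) hξ hξ0 hη hη0 h
  obtain ⟨ω, e1, e2, e3⟩ := ae_point ((h1.and (h2.and h3)) : _)
  have a1 : 𝔈.E0 ξ = 𝔈.cond (fun _ => (0 : ℝ)) ξ ω := e1.symm
  have a2 : 𝔈.cond (fun _ => (0 : ℝ)) η ω = 𝔈.E0 η := e2
  rw [a1, ← a2]; exact e3

lemma E0_congr' [IsProbabilityMeasure μ] (hT : 0 < T) (hξ : ξ ∈ 𝔈.Dom) (hξ0 : 0 ≤ᵐ[μ] ξ)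
    (hη : η ∈ 𝔈.Dom) (hη0 : 0 ≤ᵐ[μ] η) (h : ξ =ᵐ[μ] η) : 𝔈.E0 ξ = 𝔈.E0 η :=
  le_antisymm (E0_mono' hT hξ hξ0 hη hη0 h.le) (E0_mono' hT hη hη0 hξ hξ0 h.symm.le)

lemma E0_add_const [IsProbabilityMeasure μ] (hT : 0 < T) (hξ : ξ ∈ 𝔈.Dom)
    (hξ0 : 0 ≤ᵐ[μ] ξ) {c : ℝ} (hc : 0 ≤ c) :
    𝔈.E0 (ξ + fun _ => c) = 𝔈.E0 ξ + c := by
  have htr := 𝔈.translation (stop0_zero hT) hξ hξ0 (𝔈.const_mem c)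
    (Filter.Eventually.of_forall fun _ => hc) (@measurable_const ℝ Ω _ _ c)
  have hd : (ξ + fun _ => c) ∈ 𝔈.Dom := 𝔈.add_mem hξ (𝔈.const_mem c)
  have hd0 : 0 ≤ᵐ[μ] (ξ + fun _ => c) := by
    filter_upwards [hξ0] with ω h0
    simpa using add_nonneg h0 hc
  have h1 := 𝔈.E0_eq hd hd0
  have h2 := 𝔈.E0_eq hξ hξ0
  obtain ⟨ω, e1, e2, e3⟩ := ae_point ((h1.and (h2.and htr)) : _)
  have a1 : 𝔈.E0 (ξ + fun _ => c) = 𝔈.cond (fun _ => (0 : ℝ)) (ξ + fun _ => c) ω := e1.symm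
  have a2 : 𝔈.cond (fun _ => (0 : ℝ)) (ξ + fun _ => c) ω
      = 𝔈.cond (fun _ => (0 : ℝ)) ξ ω + c := e3
  have a3 : 𝔈.cond (fun _ => (0 : ℝ)) ξ ω = 𝔈.E0 ξ := e2
  rw [a1, a2, a3]

lemma eq_of_E0_eq [IsProbabilityMeasure μ] (hT : 0 < T) (hξ : ξ ∈ 𝔈.Dom) (hξ0 : 0 ≤ᵐ[μ] ξ)
    (hη : η ∈ 𝔈.Dom) (hη0 : 0 ≤ᵐ[μ] η) (hle : ξ ≤ᵐ[μ] η) (he : 𝔈.E0 ξ = 𝔈.E0 η) :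
    ξ =ᵐ[μ] η := by
  refine 𝔈.strict_mono (stop0_zero hT) hξ hξ0 hη hη0 hle ?_
  have h1 := 𝔈.E0_eq hξ hξ0
  have h2 := 𝔈.E0_eq hη hη0
  filter_upwards [h1, h2] with ω a b
  rw [a, b, he]

lemma E0_cond [IsProbabilityMeasure μ] (hT : 0 < T) (hS : Stop0 ℱ T S)
    (hξ : ξ ∈ 𝔈.Dom) (hξ0 : 0 ≤ᵐ[μ] ξ) :
    𝔈.E0 (𝔈.cond S ξ) = 𝔈.E0 ξ := by
  have htc := 𝔈.time_consistent (stop0_zero hT) hS (fun ω => hS.2.1 ω) hξ hξ0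
  have h1 := 𝔈.E0_eq (𝔈.cond_mem hS hξ hξ0) (𝔈.cond_nonneg hS hξ hξ0)
  have h2 := 𝔈.E0_eq hξ hξ0
  obtain ⟨ω, e1, e2, e3⟩ := ae_point ((h1.and (h2.and htc)) : _)
  have a1 : 𝔈.E0 (𝔈.cond S ξ) = 𝔈.cond (fun _ => (0 : ℝ)) (𝔈.cond S ξ) ω := e1.symm
  rw [a1, e3]
  exact e2

lemma cond_zero' (hτ : Stop0 ℱ T τ) :
    𝔈.cond τ (fun _ => (0 : ℝ)) =ᵐ[μ] fun _ => (0 : ℝ) := by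
  have h := 𝔈.zero_one hτ 𝔈.zero_mem (Filter.Eventually.of_forall fun _ => le_rfl)
    (A := ∅) (@MeasurableSet.empty _ hτ.1.measurableSpace)
  have e1 : (∅ : Set Ω).indicator (fun _ : Ω => (0 : ℝ)) = fun _ => (0 : ℝ) := by
    funext ω; simp
  have e2 : (∅ : Set Ω).indicator (𝔈.cond τ fun _ => (0 : ℝ)) = fun _ => (0 : ℝ) := by
    funext ω; simp
  rw [e1, e2] at h
  exact h

lemma cond_of_meas (hτ : Stop0 ℱ T τ) (hξ : ξ ∈ 𝔈.Dom) (hξ0 : 0 ≤ᵐ[μ] ξ)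
    (hmeas : Measurable[hτ.1.measurableSpace] ξ) : 𝔈.cond τ ξ =ᵐ[μ] ξ := by
  have h := 𝔈.translation hτ 𝔈.zero_mem (Filter.Eventually.of_forall fun _ => le_rfl)
    hξ hξ0 hmeas
  have e : (fun _ : Ω => (0 : ℝ)) + ξ = ξ := by funext ω; simp
  rw [e] at h
  filter_upwards [h, cond_zero' (𝔈 := 𝔈) hτ] with ω a b
  rw [a]
  show 𝔈.cond τ (fun _ => (0 : ℝ)) ω + ξ ω = ξ ω
  rw [b]; simp

lemma paste_isStopIn (hS : Stop0 ℱ T S) (hτ : IsStopIn ℱ T S τ) (hσ : IsStopIn ℱ T S σ)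
    {A : Set Ω} (hA : MeasurableSet[hS.1.measurableSpace] A) :
    IsStopIn ℱ T S (fun ω => if ω ∈ A then τ ω else σ ω) := by
  refine ⟨?_, fun ω => ?_, fun ω => ?_⟩
  · intro t
    have hset : {ω | (((if ω ∈ A then τ ω else σ ω) : ℝ) : WithTop ℝ) ≤ (t : WithTop ℝ)}
        = ((A ∩ {ω | ((S ω : ℝ) : WithTop ℝ) ≤ (t : WithTop ℝ)}) ∩ {ω | ((τ ω : ℝ) : WithTop ℝ) ≤ (t : WithTop ℝ)})
          ∪ ((Aᶜ ∩ {ω | ((S ω : ℝ) : WithTop ℝ) ≤ (t : WithTop ℝ)}) ∩ {ω | ((σ ω : ℝ) : WithTop ℝ) ≤ (t : WithTop ℝ)}) := by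
      ext ω
      by_cases hω : ω ∈ A
      · simp only [Set.mem_setOf_eq, if_pos hω, Set.mem_union, Set.mem_inter_iff,
          Set.mem_compl_iff, hω, true_and, not_true_eq_false, false_and, or_false,
          WithTop.coe_le_coe]
        exact ⟨fun h => ⟨(hτ.2.1 ω).trans h, h⟩, fun h => h.2⟩
      · simp only [Set.mem_setOf_eq, if_neg hω, Set.mem_union, Set.mem_inter_iff,
          Set.mem_compl_iff, hω, false_and, not_false_eq_true, true_and, false_or,
          WithTop.coe_le_coe]
        exact ⟨fun h => ⟨(hσ.2.1 ω).trans h, h⟩, fun h => h.2⟩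
    rw [hset]
    exact MeasurableSet.union ((hA.2 t).inter (hτ.1 t))
      ((hA.compl.2 t).inter (hσ.1 t))
  · by_cases hω : ω ∈ A <;> simp [hω, hτ.2.1 ω, hσ.2.1 ω]
  · by_cases hω : ω ∈ A <;> simp [hω, hτ.2.2 ω, hσ.2.2 ω]

lemma exists_paste_max [IsProbabilityMeasure μ] {X : (Ω → ℝ) → Ω → ℝ}
    (hX : Admissible 𝔈 X) (hS : Stop0 ℱ T S)
    (hτ : IsStopIn ℱ T S τ) (hσ : IsStopIn ℱ T S σ) :
    ∃ ρ, IsStopIn ℱ T S ρ ∧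
      𝔈.cond S (X ρ) =ᵐ[μ] fun ω => max (𝔈.cond S (X τ) ω) (𝔈.cond S (X σ) ω) := by
  have hτ0 : Stop0 ℱ T τ := stop0_of_isStopIn hS hτ
  have hσ0 : Stop0 ℱ T σ := stop0_of_isStopIn hS hσ
  obtain ⟨hτdom, hτpos, -⟩ := hX.1 τ hτ0
  obtain ⟨hσdom, hσpos, -⟩ := hX.1 σ hσ0
  have hmτ : Measurable[hS.1.measurableSpace] (𝔈.cond S (X τ)) :=
    𝔈.cond_adapted hS hτdom hτpos
  have hmσ : Measurable[hS.1.measurableSpace] (𝔈.cond S (X σ)) :=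
    𝔈.cond_adapted hS hσdom hσpos
  set A : Set Ω := {ω | 𝔈.cond S (X σ) ω ≤ 𝔈.cond S (X τ) ω} with hAdef
  have hA : MeasurableSet[hS.1.measurableSpace] A := measurableSet_le hmσ hmτ
  set ρ : Ω → ℝ := fun ω => if ω ∈ A then τ ω else σ ω with hρdef
  have hρ : IsStopIn ℱ T S ρ := paste_isStopIn hS hτ hσ hA
  have hρ0 : Stop0 ℱ T ρ := stop0_of_isStopIn hS hρ
  obtain ⟨hρdom, hρpos, -⟩ := hX.1 ρ hρ0
  -- equality of indicators of the rewards
  have ind1 : A.indicator (X ρ) =ᵐ[μ] A.indicator (X τ) := by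
    filter_upwards [hX.2 ρ τ hρ0 hτ0] with ω h
    by_cases hω : ω ∈ A
    · have : ρ ω = τ ω := by simp [hρdef, if_pos hω]
      simp [Set.indicator_of_mem hω, h this]
    · simp [Set.indicator_of_notMem hω]
  have ind2 : Aᶜ.indicator (X ρ) =ᵐ[μ] Aᶜ.indicator (X σ) := by
    filter_upwards [hX.2 ρ σ hρ0 hσ0] with ω h
    by_cases hω : ω ∈ A
    · simp [Set.indicator_of_notMem (by simpa using hω : ω ∉ Aᶜ)]
    · have : ρ ω = σ ω := by simp [hρdef, if_neg hω]
      simp [Set.indicator_of_mem (by simpa using hω : ω ∈ Aᶜ), h this]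
  have indpos : ∀ (B : Set Ω) (ζ : Ω → ℝ), 0 ≤ᵐ[μ] ζ → 0 ≤ᵐ[μ] B.indicator ζ := by
    intro B ζ hζ
    filter_upwards [hζ] with ω h0
    by_cases hω : ω ∈ B
    · simpa [Set.indicator_of_mem hω] using h0
    · simp [Set.indicator_of_notMem hω]
  have hAm : MeasurableSet A := hS.1.measurableSpace_le _ hA
  have dρA : A.indicator (X ρ) ∈ 𝔈.Dom := 𝔈.indicator_mem hρdom hAm
  have dτA : A.indicator (X τ) ∈ 𝔈.Dom := 𝔈.indicator_mem hτdom hAm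
  have dρAc : Aᶜ.indicator (X ρ) ∈ 𝔈.Dom := 𝔈.indicator_mem hρdom hAm.compl
  have dσAc : Aᶜ.indicator (X σ) ∈ 𝔈.Dom := 𝔈.indicator_mem hσdom hAm.compl
  have z1 := 𝔈.zero_one hS hρdom hρpos hA
  have z2 := 𝔈.zero_one hS hτdom hτpos hA
  have z3 := 𝔈.zero_one hS hρdom hρpos hA.compl
  have z4 := 𝔈.zero_one hS hσdom hσpos hA.compl
  have c1 : 𝔈.cond S (A.indicator (X ρ)) =ᵐ[μ] 𝔈.cond S (A.indicator (X τ)) :=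
    cond_congr hS dρA (indpos _ _ hρpos) dτA (indpos _ _ hτpos) ind1
  have c2 : 𝔈.cond S (Aᶜ.indicator (X ρ)) =ᵐ[μ] 𝔈.cond S (Aᶜ.indicator (X σ)) :=
    cond_congr hS dρAc (indpos _ _ hρpos) dσAc (indpos _ _ hσpos) ind2
  have iA : A.indicator (𝔈.cond S (X ρ)) =ᵐ[μ] A.indicator (𝔈.cond S (X τ)) :=
    (z1.symm.trans c1).trans z2
  have iB : Aᶜ.indicator (𝔈.cond S (X ρ)) =ᵐ[μ] Aᶜ.indicator (𝔈.cond S (X σ)) :=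
    (z3.symm.trans c2).trans z4
  refine ⟨ρ, hρ, ?_⟩
  filter_upwards [iA, iB] with ω h1 h2
  show 𝔈.cond S (X ρ) ω = max (𝔈.cond S (X τ) ω) (𝔈.cond S (X σ) ω)
  by_cases hω : ω ∈ A
  · have e : 𝔈.cond S (X ρ) ω = 𝔈.cond S (X τ) ω := by
      simpa [Set.indicator_of_mem hω] using h1
    have hle : 𝔈.cond S (X σ) ω ≤ 𝔈.cond S (X τ) ω := hω
    rw [e, max_eq_left hle]
  · have e : 𝔈.cond S (X ρ) ω = 𝔈.cond S (X σ) ω := by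
      simpa [Set.indicator_of_mem (Set.mem_compl hω)] using h2
    have hle : 𝔈.cond S (X τ) ω ≤ 𝔈.cond S (X σ) ω := (not_le.1 hω).le
    rw [e, max_eq_right hle]


lemma E0_mct [IsProbabilityMeasure μ] (hT : 0 < T) {ξ : ℕ → Ω → ℝ} {ζ : Ω → ℝ}
    (hdom : ∀ n, ξ n ∈ 𝔈.Dom) (h0 : ∀ n, 0 ≤ᵐ[μ] ξ n) (hmeas : ∀ n, Measurable (ξ n))
    (hζdom : ζ ∈ 𝔈.Dom) (hζmeas : Measurable ζ)
    (hmono : ∀ᵐ ω ∂μ, Monotone fun n => ξ n ω)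
    (hlim : ∀ᵐ ω ∂μ, Tendsto (fun n => ξ n ω) atTop (nhds (ζ ω))) :
    Tendsto (fun n => 𝔈.E0 (ξ n)) atTop (nhds (𝔈.E0 ζ)) := by
  have hζ0 : 0 ≤ᵐ[μ] ζ := by
    filter_upwards [h0 0, hmono, hlim] with ω a b c
    exact a.trans (b.ge_of_tendsto c 0)
  have hle : ∀ n, ξ n ≤ᵐ[μ] ζ := fun n => by
    filter_upwards [hmono, hlim] with ω b c using b.ge_of_tendsto c n
  have hE0le : ∀ n, 𝔈.E0 (ξ n) ≤ 𝔈.E0 ζ := fun n =>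
    E0_mono' hT (hdom n) (h0 n) hζdom hζ0 (hle n)
  have hE0mono : Monotone fun n => 𝔈.E0 (ξ n) := by
    apply monotone_nat_of_le_succ
    intro n
    refine E0_mono' hT (hdom n) (h0 n) (hdom (n + 1)) (h0 (n + 1)) ?_
    filter_upwards [hmono] with ω b using b (Nat.le_succ n)
  have hbdd : BddAbove (Set.range fun n => 𝔈.E0 (ξ n)) :=
    ⟨𝔈.E0 ζ, by rintro x ⟨n, rfl⟩; exact hE0le n⟩
  have htend := tendsto_atTop_ciSup hE0mono hbdd
  set L := ⨆ n, 𝔈.E0 (ξ n) with hL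
  have hLle : L ≤ 𝔈.E0 ζ := ciSup_le hE0le
  have hge : 𝔈.E0 ζ ≤ L := by
    refine le_of_forall_pos_le_add ?_
    intro ε hε
    set A : ℕ → Set Ω := fun n => ⋃ k ∈ Finset.range (n + 1), {ω | ζ ω - ε < ξ k ω}
      with hAdef
    have hAmeas : ∀ n, MeasurableSet (A n) := fun n =>
      Finset.measurableSet_biUnion _ fun k _ =>
        measurableSet_lt (hζmeas.sub measurable_const) (hmeas k)
    have hAmono : Monotone A := by
      intro a b hab ω hω
      simp only [hAdef, Set.mem_iUnion, Finset.mem_range, exists_prop] at hω ⊢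
      obtain ⟨k, hk, h⟩ := hω
      exact ⟨k, by omega, h⟩
    have hAU : ∀ᵐ ω ∂μ, ω ∈ ⋃ n, A n := by
      filter_upwards [hlim] with ω c
      have he : ∀ᶠ n in atTop, ζ ω - ε < ξ n ω :=
        c.eventually (eventually_gt_nhds (by linarith))
      obtain ⟨n, hn⟩ := he.exists
      refine Set.mem_iUnion.2 ⟨n, ?_⟩
      simp only [hAdef, Set.mem_iUnion, Finset.mem_range, exists_prop]
      exact ⟨n, Nat.lt_succ_self n, hn⟩
    have hkey : ∀ n, 𝔈.E0 ((A n).indicator ζ) ≤ 𝔈.E0 (ξ n) + ε := by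
      intro n
      have hd : (A n).indicator ζ ∈ 𝔈.Dom := 𝔈.indicator_mem hζdom (hAmeas n)
      have hd0 : 0 ≤ᵐ[μ] (A n).indicator ζ := by
        filter_upwards [hζ0] with ω h0'
        by_cases hω : ω ∈ A n
        · simpa [Set.indicator_of_mem hω] using h0'
        · simp [Set.indicator_of_notMem hω]
      have hsum0 : 0 ≤ᵐ[μ] (ξ n + fun _ => ε) := by
        filter_upwards [h0 n] with ω h0''
        simpa using add_nonneg h0'' hε.le
      have hptle : (A n).indicator ζ ≤ᵐ[μ] ξ n + fun _ => ε := by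
        filter_upwards [hmono, h0 n] with ω hm h0''
        have h0w : (0 : ℝ) ≤ ξ n ω := h0''
        show (A n).indicator ζ ω ≤ ξ n ω + ε
        by_cases hω : ω ∈ A n
        · have hex : ∃ k, k < n + 1 ∧ ζ ω - ε < ξ k ω := by
            simpa only [hAdef, Set.mem_iUnion, Finset.mem_range, exists_prop,
              Set.mem_setOf_eq] using hω
          obtain ⟨k, hk, hωk⟩ := hex
          have hkn : ξ k ω ≤ ξ n ω := hm (by omega)
          rw [Set.indicator_of_mem hω]
          linarith
        · rw [Set.indicator_of_notMem hω]
          linarith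
      calc 𝔈.E0 ((A n).indicator ζ) ≤ 𝔈.E0 (ξ n + fun _ => ε) :=
            E0_mono' hT hd hd0 (𝔈.add_mem (hdom n) (𝔈.const_mem ε)) hsum0 hptle
        _ = 𝔈.E0 (ξ n) + ε := E0_add_const hT (hdom n) (h0 n) hε.le
    have h1t := 𝔈.h1 hζdom hζ0 hAmeas hAmono hAU
    refine le_of_tendsto h1t (Filter.Eventually.of_forall fun n => (hkey n).trans ?_)
    have := le_ciSup hbdd n
    have h2 : 𝔈.E0 (ξ n) ≤ L := this
    linarith
  have hEq : 𝔈.E0 ζ = L := le_antisymm hge hLle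
  rw [hEq]
  exact htend


lemma value_dom [IsProbabilityMeasure μ] (hT : 0 < T) {X v : (Ω → ℝ) → Ω → ℝ}
    (hX : Admissible 𝔈 X) (hbdd : BddRewardE0 𝔈 X) (hv : IsValueFam 𝔈 X v)
    {S : Ω → ℝ} (hS : Stop0 ℱ T S) :
    v S ∈ 𝔈.Dom ∧ 0 ≤ᵐ[μ] v S ∧
      𝔈.E0 (v S) = sSup ((fun τ => 𝔈.E0 (X τ)) '' {τ | IsStopIn ℱ T S τ}) := by
  classical
  set K : Set ℝ := (fun τ => 𝔈.E0 (X τ)) '' {τ | IsStopIn ℱ T S τ} with hKdef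
  have hKne : K.Nonempty := ⟨_, ⟨S, isStopIn_self hS, rfl⟩⟩
  obtain ⟨C, hC⟩ := hbdd
  have hKbdd : BddAbove K := by
    refine ⟨C, ?_⟩
    rintro x ⟨τ, hτ, rfl⟩
    exact hC τ (stop0_of_isStopIn hS hτ)
  set s := sSup K with hsdef
  have hch : ∀ n : ℕ, ∃ τ, IsStopIn ℱ T S τ ∧ s - 1 / (n + 1) < 𝔈.E0 (X τ) := by
    intro n
    have hlt : s - 1 / (n + 1 : ℝ) < s := by
      have : (0 : ℝ) < 1 / (n + 1) := by positivity
      linarith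
    obtain ⟨x, hx, hxlt⟩ := exists_lt_of_lt_csSup hKne hlt
    obtain ⟨τ, hτ, rfl⟩ := hx
    exact ⟨τ, hτ, hxlt⟩
  choose τse hτse hτsE using hch
  have hpaste : ∀ τ σ : Ω → ℝ, IsStopIn ℱ T S τ → IsStopIn ℱ T S σ → ∃ ρ,
      IsStopIn ℱ T S ρ ∧ 𝔈.cond S (X ρ) =ᵐ[μ]
        fun ω => max (𝔈.cond S (X τ) ω) (𝔈.cond S (X σ) ω) :=
    fun τ σ hτ hσ => exists_paste_max hX hS hτ hσ
  choose pf pf1 pf2 using hpaste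
  let ρ : ℕ → {f : Ω → ℝ // IsStopIn ℱ T S f} := fun n =>
    Nat.rec ⟨τse 0, hτse 0⟩
      (fun k p => ⟨pf (τse (k + 1)) p.1 (hτse (k + 1)) p.2,
        pf1 _ _ (hτse (k + 1)) p.2⟩) n
  let g : ℕ → Ω → ℝ := fun n => 𝔈.cond S (X (ρ n).1)
  have hst0 : ∀ n, Stop0 ℱ T (ρ n).1 := fun n => stop0_of_isStopIn hS (ρ n).2
  have hXdom : ∀ n, X (ρ n).1 ∈ 𝔈.Dom := fun n => (hX.1 _ (hst0 n)).1
  have hXpos : ∀ n, 0 ≤ᵐ[μ] X (ρ n).1 := fun n => (hX.1 _ (hst0 n)).2.1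
  have hgdom : ∀ n, g n ∈ 𝔈.Dom := fun n => 𝔈.cond_mem hS (hXdom n) (hXpos n)
  have hgpos : ∀ n, 0 ≤ᵐ[μ] g n := fun n => 𝔈.cond_nonneg hS (hXdom n) (hXpos n)
  have hgmeas : ∀ n, Measurable (g n) := fun n =>
    (𝔈.cond_adapted hS (hXdom n) (hXpos n)).mono hS.1.measurableSpace_le le_rfl
  have hgsucc : ∀ n, g (n + 1) =ᵐ[μ]
      fun ω => max (𝔈.cond S (X (τse (n + 1))) ω) (g n ω) := fun n =>
    pf2 (τse (n + 1)) (ρ n).1 (hτse (n + 1)) (ρ n).2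
  have hgmono : ∀ n, g n ≤ᵐ[μ] g (n + 1) := fun n => by
    filter_upwards [hgsucc n] with ω h
    rw [h]
    exact le_max_right _ _
  have hgE0 : ∀ n, 𝔈.E0 (g n) = 𝔈.E0 (X (ρ n).1) := fun n =>
    E0_cond hT hS (hXdom n) (hXpos n)
  have hE0le : ∀ n, 𝔈.E0 (g n) ≤ s := fun n => by
    rw [hgE0 n]
    exact le_csSup hKbdd ⟨(ρ n).1, (ρ n).2, rfl⟩
  have hglow : ∀ n, 𝔈.cond S (X (τse n)) ≤ᵐ[μ] g n := by
    intro n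
    cases n with
    | zero => exact EventuallyLE.refl _ _
    | succ k =>
      filter_upwards [hgsucc k] with ω h
      rw [h]
      exact le_max_left _ _
  have hE0lb : ∀ n, s - 1 / (n + 1) ≤ 𝔈.E0 (g n) := by
    intro n
    have h1 : 𝔈.E0 (X (τse n)) = 𝔈.E0 (𝔈.cond S (X (τse n))) :=
      (E0_cond hT hS (hX.1 _ (stop0_of_isStopIn hS (hτse n))).1
        (hX.1 _ (stop0_of_isStopIn hS (hτse n))).2.1).symm
    have h2 : 𝔈.E0 (𝔈.cond S (X (τse n))) ≤ 𝔈.E0 (g n) :=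
      E0_mono' hT (𝔈.cond_mem hS (hX.1 _ (stop0_of_isStopIn hS (hτse n))).1
          (hX.1 _ (stop0_of_isStopIn hS (hτse n))).2.1)
        (𝔈.cond_nonneg hS (hX.1 _ (stop0_of_isStopIn hS (hτse n))).1
          (hX.1 _ (stop0_of_isStopIn hS (hτse n))).2.1)
        (hgdom n) (hgpos n) (hglow n)
    have h3 := (hτsE n).le
    rw [h1] at h3
    linarith [h3.trans h2]
  have hub : ∀ n, g n ≤ᵐ[μ] v S := fun n => (hv S hS).1 (g n) ⟨(ρ n).1, (ρ n).2, rfl⟩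
  have hAE : ∀ᵐ ω ∂μ, (∀ n, g n ω ≤ g (n + 1) ω) ∧ (∀ n, g n ω ≤ v S ω) ∧
      (∀ n, 0 ≤ g n ω) :=
    (ae_all_iff.2 hgmono).and ((ae_all_iff.2 hub).and (ae_all_iff.2 hgpos))
  let G : Ω → ℝ := fun ω => ⨆ n, g n ω
  have hGtend : ∀ᵐ ω ∂μ, Tendsto (fun n => g n ω) atTop (nhds (G ω)) ∧
      Monotone (fun n => g n ω) ∧ G ω ≤ v S ω ∧ 0 ≤ G ω := by
    filter_upwards [hAE] with ω h
    obtain ⟨h1, h2, h3⟩ := h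
    have hm : Monotone fun n => g n ω := monotone_nat_of_le_succ h1
    have hb : BddAbove (Set.range fun n => g n ω) := by
      refine ⟨v S ω, ?_⟩
      rintro x ⟨n, rfl⟩
      exact h2 n
    exact ⟨tendsto_atTop_ciSup hm hb, hm, ciSup_le h2, (h3 0).trans (le_ciSup hb 0)⟩
  have hGae : AEMeasurable G μ :=
    aemeasurable_of_tendsto_metrizable_ae' (fun n => (hgmeas n).aemeasurable)
      (hGtend.mono fun ω h => h.1)
  set gm : Ω → ℝ := hGae.mk G with hgmdef
  have hgm_meas : Measurable gm := hGae.measurable_mk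
  have hGgm : G =ᵐ[μ] gm := hGae.ae_eq_mk
  have hgm_tend : ∀ᵐ ω ∂μ, Tendsto (fun n => g n ω) atTop (nhds (gm ω)) := by
    filter_upwards [hGtend, hGgm] with ω h e
    rw [← e]
    exact h.1
  have hgm_dom : gm ∈ 𝔈.Dom :=
    𝔈.h5 hgdom hgpos hgm_tend ⟨s, Filter.Frequently.of_forall hE0le⟩
  have hgm_pos : 0 ≤ᵐ[μ] gm := by
    filter_upwards [hGtend, hGgm] with ω h e
    rw [← e]
    exact h.2.2.2
  have hgm_mono_ae : ∀ᵐ ω ∂μ, Monotone fun n => g n ω := hGtend.mono fun ω h => h.2.1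
  have hE0tend : Tendsto (fun n => 𝔈.E0 (g n)) atTop (nhds (𝔈.E0 gm)) :=
    E0_mct hT hgdom hgpos hgmeas hgm_dom hgm_meas hgm_mono_ae hgm_tend
  have hE0s : Tendsto (fun n => 𝔈.E0 (g n)) atTop (nhds s) := by
    have hlow : Tendsto (fun n : ℕ => s - 1 / (n + 1 : ℝ)) atTop (nhds s) := by
      have := tendsto_one_div_add_atTop_nhds_zero_nat (𝕜 := ℝ)
      simpa using tendsto_const_nhds.sub this
    exact tendsto_of_tendsto_of_tendsto_of_le_of_le hlow tendsto_const_nhds hE0lb hE0le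
  have hE0gm : 𝔈.E0 gm = s := tendsto_nhds_unique hE0tend hE0s
  -- gm is an a.e. upper bound of the whole family
  have hub2 : ∀ f ∈ {f : Ω → ℝ | ∃ τ, IsStopIn ℱ T S τ ∧ f = 𝔈.cond S (X τ)},
      f ≤ᵐ[μ] gm := by
    rintro f ⟨τ, hτ', rfl⟩
    have hτ0' : Stop0 ℱ T τ := stop0_of_isStopIn hS hτ'
    obtain ⟨hτdom, hτpos, -⟩ := hX.1 τ hτ0'
    set fτ : Ω → ℝ := 𝔈.cond S (X τ) with hfτdef
    have hfdom : fτ ∈ 𝔈.Dom := 𝔈.cond_mem hS hτdom hτpos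
    have hfpos : 0 ≤ᵐ[μ] fτ := 𝔈.cond_nonneg hS hτdom hτpos
    have hfmeas : Measurable fτ :=
      (𝔈.cond_adapted hS hτdom hτpos).mono hS.1.measurableSpace_le le_rfl
    let Mn : ℕ → Ω → ℝ := fun n ω => max (fτ ω) (g n ω)
    let M : Ω → ℝ := fun ω => max (fτ ω) (gm ω)
    have hps : ∀ n, IsStopIn ℱ T S (pf τ (ρ n).1 hτ' (ρ n).2) := fun n =>
      pf1 τ (ρ n).1 hτ' (ρ n).2
    have hMn_eq : ∀ n, 𝔈.cond S (X (pf τ (ρ n).1 hτ' (ρ n).2)) =ᵐ[μ] Mn n := fun n =>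
      pf2 τ (ρ n).1 hτ' (ρ n).2
    have hpdom : ∀ n, 𝔈.cond S (X (pf τ (ρ n).1 hτ' (ρ n).2)) ∈ 𝔈.Dom := fun n =>
      𝔈.cond_mem hS (hX.1 _ (stop0_of_isStopIn hS (hps n))).1
        (hX.1 _ (stop0_of_isStopIn hS (hps n))).2.1
    have hppos : ∀ n, 0 ≤ᵐ[μ] 𝔈.cond S (X (pf τ (ρ n).1 hτ' (ρ n).2)) := fun n =>
      𝔈.cond_nonneg hS (hX.1 _ (stop0_of_isStopIn hS (hps n))).1
        (hX.1 _ (stop0_of_isStopIn hS (hps n))).2.1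
    have hMn_dom : ∀ n, Mn n ∈ 𝔈.Dom := by
      intro n
      refine 𝔈.sandwich_mem (hpdom n) ?_
      filter_upwards [hMn_eq n, hfpos] with ω he hf
      exact ⟨le_trans hf (le_max_left _ _), le_of_eq he.symm⟩
    have hMn_pos : ∀ n, 0 ≤ᵐ[μ] Mn n := fun n => by
      filter_upwards [hfpos] with ω hf
      exact le_trans hf (le_max_left _ _)
    have hMn_meas : ∀ n, Measurable (Mn n) := fun n => hfmeas.max (hgmeas n)
    have hMn_E0 : ∀ n, 𝔈.E0 (Mn n) ≤ s := by
      intro n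
      have he : 𝔈.E0 (Mn n) = 𝔈.E0 (𝔈.cond S (X (pf τ (ρ n).1 hτ' (ρ n).2))) :=
        E0_congr' hT (hMn_dom n) (hMn_pos n) (hpdom n) (hppos n) (hMn_eq n).symm
      rw [he, E0_cond hT hS (hX.1 _ (stop0_of_isStopIn hS (hps n))).1
        (hX.1 _ (stop0_of_isStopIn hS (hps n))).2.1]
      exact le_csSup hKbdd ⟨_, hps n, rfl⟩
    have hM_meas : Measurable M := hfmeas.max hgm_meas
    have hM_tend : ∀ᵐ ω ∂μ, Tendsto (fun n => Mn n ω) atTop (nhds (M ω)) := by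
      filter_upwards [hgm_tend] with ω h
      exact tendsto_const_nhds.max h
    have hM_dom : M ∈ 𝔈.Dom :=
      𝔈.h5 hMn_dom hMn_pos hM_tend ⟨s, Filter.Frequently.of_forall hMn_E0⟩
    have hM_mono : ∀ᵐ ω ∂μ, Monotone fun n => Mn n ω := by
      filter_upwards [hgm_mono_ae] with ω h a b hab
      exact max_le_max le_rfl (h hab)
    have hM_E0tend : Tendsto (fun n => 𝔈.E0 (Mn n)) atTop (nhds (𝔈.E0 M)) :=
      E0_mct hT hMn_dom hMn_pos hMn_meas hM_dom hM_meas hM_mono hM_tend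
    have hM_E0le : 𝔈.E0 M ≤ s :=
      le_of_tendsto hM_E0tend (Filter.Eventually.of_forall hMn_E0)
    have hM_pos : 0 ≤ᵐ[μ] M := by
      filter_upwards [hfpos] with ω hf
      exact le_trans hf (le_max_left _ _)
    have hgmM : gm ≤ᵐ[μ] M := by
      filter_upwards with ω
      exact le_max_right _ _
    have hE0ge : 𝔈.E0 gm ≤ 𝔈.E0 M := E0_mono' hT hgm_dom hgm_pos hM_dom hM_pos hgmM
    have hE0eq : 𝔈.E0 gm = 𝔈.E0 M := le_antisymm hE0ge (by rw [hE0gm]; exact hM_E0le)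
    have heq : gm =ᵐ[μ] M := eq_of_E0_eq hT hgm_dom hgm_pos hM_dom hM_pos hgmM hE0eq
    filter_upwards [heq] with ω h
    have : fτ ω ≤ M ω := le_max_left _ _
    rw [← h] at this
    exact this
  have hvle : v S ≤ᵐ[μ] gm := (hv S hS).2 gm hub2
  have hgmle : gm ≤ᵐ[μ] v S := by
    filter_upwards [hGtend, hGgm] with ω h e
    rw [← e]
    exact h.2.2.1
  have hvgm : v S =ᵐ[μ] gm := hvle.antisymm hgmle
  have hvdom : v S ∈ 𝔈.Dom := by
    refine 𝔈.sandwich_mem hgm_dom ?_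
    filter_upwards [hvgm, hgm_pos] with ω he hp
    exact ⟨by rw [he]; exact hp, le_of_eq he⟩
  have hvpos : 0 ≤ᵐ[μ] v S := by
    filter_upwards [hvgm, hgm_pos] with ω he hp
    rw [he]; exact hp
  exact ⟨hvdom, hvpos, by
    rw [E0_congr' hT hvdom hvpos hgm_dom hgm_pos hvgm, hE0gm]⟩


end AuxLemmas

/-- characterization of optimal stopping times. -/
theorem optimal_tfae [IsProbabilityMeasure μ] (hT : 0 < T) (𝔈 : FExp μ T ℱ)
    (X v : (Ω → ℝ) → Ω → ℝ) (hX : Admissible 𝔈 X) (hbdd : BddRewardE0 𝔈 X)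
    (hv : IsValueFam 𝔈 X v)
    (S τs : Ω → ℝ) (hS : Stop0 ℱ T S) (hτs : IsStopIn ℱ T S τs) :
    -- (a) ↔ (b)
    ((v S =ᵐ[μ] 𝔈.cond S (X τs)) ↔
      (v τs =ᵐ[μ] X τs ∧ 𝔈.E0 (v S) = 𝔈.E0 (v τs))) ∧
    -- (a) ↔ (c)
    ((v S =ᵐ[μ] 𝔈.cond S (X τs)) ↔ 𝔈.E0 (v S) = 𝔈.E0 (X τs)) := by
  have hτ0 : Stop0 ℱ T τs := stop0_of_isStopIn hS hτs
  obtain ⟨hXd, hXp, hXm⟩ := hX.1 τs hτ0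
  obtain ⟨hvSdom, hvSpos, hvSE⟩ := value_dom hT hX hbdd hv hS
  obtain ⟨hvτdom, hvτpos, hvτE⟩ := value_dom hT hX hbdd hv hτ0
  set KS := (fun τ => 𝔈.E0 (X τ)) '' {τ | IsStopIn ℱ T S τ} with hKSdef
  set Kτ := (fun τ => 𝔈.E0 (X τ)) '' {τ | IsStopIn ℱ T τs τ} with hKτdef
  have hcd : 𝔈.cond S (X τs) ∈ 𝔈.Dom := 𝔈.cond_mem hS hXd hXp
  have hcp : 0 ≤ᵐ[μ] 𝔈.cond S (X τs) := 𝔈.cond_nonneg hS hXd hXp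
  have hcle : 𝔈.cond S (X τs) ≤ᵐ[μ] v S := (hv S hS).1 _ ⟨τs, hτs, rfl⟩
  have htower : 𝔈.E0 (𝔈.cond S (X τs)) = 𝔈.E0 (X τs) := E0_cond hT hS hXd hXp
  obtain ⟨C, hC⟩ := hbdd
  have hKSbdd : BddAbove KS := by
    refine ⟨C, ?_⟩
    rintro x ⟨τ, hτ', rfl⟩
    exact hC τ (stop0_of_isStopIn hS hτ')
  have hKτne : Kτ.Nonempty := ⟨_, ⟨τs, isStopIn_self hτ0, rfl⟩⟩
  have hsub : Kτ ⊆ KS := by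
    rintro x ⟨τ, hτ', rfl⟩
    exact ⟨τ, ⟨hτ'.1, fun ω => (hτs.2.1 ω).trans (hτ'.2.1 ω), hτ'.2.2⟩, rfl⟩
  have hle2 : sSup Kτ ≤ sSup KS := csSup_le_csSup hKSbdd hKτne hsub
  have hXles : 𝔈.E0 (X τs) ≤ sSup Kτ :=
    le_csSup (hKSbdd.mono hsub) ⟨τs, isStopIn_self hτ0, rfl⟩
  have hac : (v S =ᵐ[μ] 𝔈.cond S (X τs)) ↔ 𝔈.E0 (v S) = 𝔈.E0 (X τs) := by
    constructor
    · intro ha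
      rw [E0_congr' hT hvSdom hvSpos hcd hcp ha, htower]
    · intro hc
      exact (eq_of_E0_eq hT hcd hcp hvSdom hvSpos hcle (by rw [htower, hc])).symm
  refine ⟨?_, hac⟩
  constructor
  · intro ha
    have hc := hac.1 ha
    have h1 : 𝔈.E0 (X τs) = sSup KS := by rw [← hc, hvSE]
    have h2 : sSup Kτ = 𝔈.E0 (X τs) :=
      le_antisymm (hle2.trans h1.symm.le) hXles
    have hEvv : 𝔈.E0 (v S) = 𝔈.E0 (v τs) := by rw [hvSE, hvτE, ← h1, h2]
    refine ⟨?_, hEvv⟩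
    have hself : 𝔈.cond τs (X τs) =ᵐ[μ] X τs := cond_of_meas hτ0 hXd hXp hXm
    have hmem : 𝔈.cond τs (X τs) ≤ᵐ[μ] v τs :=
      (hv τs hτ0).1 _ ⟨τs, isStopIn_self hτ0, rfl⟩
    have hXlev : X τs ≤ᵐ[μ] v τs := by
      filter_upwards [hself, hmem] with ω a b
      rw [← a]; exact b
    have hE : 𝔈.E0 (X τs) = 𝔈.E0 (v τs) := by rw [hvτE, h2]
    exact (eq_of_E0_eq hT hXd hXp hvτdom hvτpos hXlev hE).symm
  · rintro ⟨hb1, hb2⟩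
    apply hac.2
    rw [hb2, E0_congr' hT hvτdom hvτpos hXd hXp hb1]

end OptMultStop
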